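/- Let K be a perfect field and M/K a finite extension inside an algebraic closure K̄, with Galois closure M̃, G' = Gal(M̃/K) and H' = Gal(M̃/M). Then M/K is obtained by nontrivial strong cluster magnification from some subextension L/K (K ⊆ L ⊆ M) if and only if there is an isomorphism G' ≅ A × B for some nontrivial groups A and B under which H' corresponds to A' × {1} for some subgroup A' ≤ A with index [A : A'] > 2. -/

import Mathlib

/-- The Galois closure inside the algebraic closure of a finite extension `M/K`. -/
noncomputable def galoisClosure (K : Type*) [Field K]
    (M : IntermediateField K (AlgebraicClosure K)) : IntermediateField K (AlgebraicClosure K) :=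
  IntermediateField.normalClosure K ↥M (AlgebraicClosure K)

/-- `M/K` is obtained by strong cluster magnification from the subextension `L/K` through the
finite Galois extension `F/K`: `[L:K] > 2`, the Galois closure `L̃` of `L` and `F` are
linearly disjoint over `K` (equivalently `L̃ ∩ F = K`, since `F/K` is Galois), and `LF = M`. -/
def IsStrongClusterMagnification (K : Type*) [Field K]
    (L F M : IntermediateField K (AlgebraicClosure K)) : Prop :=
  2 < Module.finrank K ↥L ∧ FiniteDimensional K ↥F ∧ IsGalois K ↥F ∧
    galoisClosure K L ⊓ F = ⊥ ∧ L ⊔ F = M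


open scoped Pointwise
open IntermediateField Module

section GroupAux

variable {G : Type*} [Group G] (N₁ N₂ : Subgroup G) [hn1 : N₁.Normal] [hn2 : N₂.Normal]

noncomputable def prodMonoidHom (hd : N₁ ⊓ N₂ = ⊥) : ↥N₁ × ↥N₂ →* G :=
  MonoidHom.noncommCoprod N₁.subtype N₂.subtype (fun a b =>
    Subgroup.commute_of_normal_of_disjoint N₁ N₂ hn1 hn2
      (by rw [disjoint_iff, hd]) a b a.2 b.2)

lemma prodMonoidHom_apply (hd : N₁ ⊓ N₂ = ⊥) (a : N₁) (b : N₂) :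
    prodMonoidHom N₁ N₂ hd (a, b) = ↑a * ↑b := rfl

lemma prodMonoidHom_bijective (hd : N₁ ⊓ N₂ = ⊥) (hs : N₁ ⊔ N₂ = ⊤) :
    Function.Bijective (prodMonoidHom N₁ N₂ hd) := by
  constructor
  · rw [← MonoidHom.ker_eq_bot_iff, eq_bot_iff]
    rintro ⟨a, b⟩ hab
    have hab' : (a : G) * b = 1 := hab
    have ha : (a : G) ∈ N₁ ⊓ N₂ := ⟨a.2, by
      have : (a : G) = (b : G)⁻¹ := eq_inv_of_mul_eq_one_left hab'
      rw [this]; exact N₂.inv_mem b.2⟩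
    rw [hd] at ha
    have ha1 : (a : G) = 1 := ha
    have hb1 : (b : G) = 1 := by rwa [ha1, one_mul] at hab'
    rw [Subgroup.mem_bot]
    exact Prod.ext (Subtype.ext ha1) (Subtype.ext hb1)
  · intro g
    have hg : g ∈ ((N₁ : Set G) * (N₂ : Set G)) := by
      rw [← Subgroup.mul_normal N₁ N₂, hs]; exact Subgroup.mem_top g
    obtain ⟨a, ha, b, hb, rfl⟩ := hg
    exact ⟨(⟨a, ha⟩, ⟨b, hb⟩), rfl⟩

/-- Internal direct-product decomposition. -/
noncomputable def prodEquiv' (hd : N₁ ⊓ N₂ = ⊥) (hs : N₁ ⊔ N₂ = ⊤) : G ≃* ↥N₁ × ↥N₂ :=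
  (MulEquiv.ofBijective (prodMonoidHom N₁ N₂ hd) (prodMonoidHom_bijective N₁ N₂ hd hs)).symm

lemma prodEquiv'_symm_apply (hd : N₁ ⊓ N₂ = ⊥) (hs : N₁ ⊔ N₂ = ⊤) (a : N₁) (b : N₂) :
    (prodEquiv' N₁ N₂ hd hs).symm (a, b) = ↑a * ↑b := rfl

lemma map_prodEquiv'_of_le (hd : N₁ ⊓ N₂ = ⊥) (hs : N₁ ⊔ N₂ = ⊤) {H : Subgroup G}
    (hH : H ≤ N₁) :
    Subgroup.map (prodEquiv' N₁ N₂ hd hs).toMonoidHom H =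
      (Subgroup.comap N₁.subtype H).prod ⊥ := by
  ext ⟨a, b⟩
  rw [Subgroup.mem_map_equiv, Subgroup.mem_prod, Subgroup.mem_comap, Subgroup.mem_bot,
    prodEquiv'_symm_apply]
  constructor
  · intro h
    have hbN₁ : (b : G) ∈ N₁ := by
      have hx : (b : G) = (↑a)⁻¹ * (↑a * ↑b) := by group
      rw [hx]; exact N₁.mul_mem (N₁.inv_mem a.2) (hH h)
    have hb' : (b : G) ∈ N₁ ⊓ N₂ := ⟨hbN₁, b.2⟩
    rw [hd, Subgroup.mem_bot] at hb'
    have hb1 : b = 1 := Subtype.ext hb'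
    refine ⟨?_, hb1⟩
    rw [hb1] at h
    simpa using h
  · rintro ⟨ha, hb⟩
    have hb' : b = 1 := hb
    rw [hb']
    simpa using ha

lemma map_prodEquiv'_sup (hd : N₁ ⊓ N₂ = ⊥) (hs : N₁ ⊔ N₂ = ⊤) {H : Subgroup G}
    (hH : H ≤ N₁) :
    Subgroup.map (prodEquiv' N₁ N₂ hd hs).toMonoidHom (H ⊔ N₂) =
      (Subgroup.comap N₁.subtype H).prod ⊤ := by
  ext ⟨a, b⟩
  rw [Subgroup.mem_map_equiv, Subgroup.mem_prod, Subgroup.mem_comap,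
    prodEquiv'_symm_apply]
  simp only [Subgroup.mem_top, and_true]
  have hb : (b : G) ∈ H ⊔ N₂ := Subgroup.mem_sup_right b.2
  rw [mul_mem_cancel_right hb]
  constructor
  · intro ha
    have ha' : (a : G) ∈ ((H : Set G) * (N₂ : Set G)) := by
      rwa [← Subgroup.mul_normal H N₂]
    obtain ⟨h, hh, n, hn, heq⟩ := ha'
    have hnN₁ : n ∈ N₁ := by
      have hx : n = h⁻¹ * ↑a := by rw [← heq]; group
      rw [hx]; exact N₁.mul_mem (N₁.inv_mem (hH hh)) a.2
    have hn' : n ∈ N₁ ⊓ N₂ := ⟨hnN₁, hn⟩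
    rw [hd, Subgroup.mem_bot] at hn'
    simp only [hn', mul_one] at heq
    show (a : G) ∈ H
    exact heq ▸ hh
  · exact fun h => Subgroup.mem_sup_left h

lemma inf_sup_eq_self' (hd : N₁ ⊓ N₂ = ⊥) (hs : N₁ ⊔ N₂ = ⊤) {X : Subgroup G}
    (hX : N₂ ≤ X) : (X ⊓ N₁) ⊔ N₂ = X := by
  refine le_antisymm (sup_le inf_le_left hX) ?_
  intro g hg
  obtain ⟨⟨a, b⟩, rfl⟩ := (prodMonoidHom_bijective N₁ N₂ hd hs).2 g
  rw [prodMonoidHom_apply] at hg ⊢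
  have haX : (a : G) ∈ X := by
    have hx : (a : G) = (↑a * ↑b) * (↑b)⁻¹ := by group
    rw [hx]; exact X.mul_mem hg (X.inv_mem (hX b.2))
  exact Subgroup.mul_mem _ (Subgroup.mem_sup_left ⟨haX, a.2⟩) (Subgroup.mem_sup_right b.2)

end GroupAux

section FieldAux

variable {F E : Type*} [Field F] [Field E] [Algebra F E] [FiniteDimensional F E] [IsGalois F E]

lemma fixingSubgroup_sup' (X Y : IntermediateField F E) :
    (X ⊔ Y).fixingSubgroup = X.fixingSubgroup ⊓ Y.fixingSubgroup :=
  (IsGalois.intermediateFieldEquivSubgroup (F := F) (E := E)).map_sup X Y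

lemma fixingSubgroup_inf' (X Y : IntermediateField F E) :
    (X ⊓ Y).fixingSubgroup = X.fixingSubgroup ⊔ Y.fixingSubgroup :=
  (IsGalois.intermediateFieldEquivSubgroup (F := F) (E := E)).map_inf X Y

lemma fixingSubgroup_inj' {X Y : IntermediateField F E}
    (h : X.fixingSubgroup = Y.fixingSubgroup) : X = Y :=
  (IsGalois.intermediateFieldEquivSubgroup (F := F) (E := E)).injective h

lemma index_fixingSubgroup' (X : IntermediateField F E) :
    X.fixingSubgroup.index = Module.finrank F X := by
  classical
  have h1 : Nat.card X.fixingSubgroup * X.fixingSubgroup.index = Nat.card (E ≃ₐ[F] E) :=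
    Subgroup.card_mul_index _
  have h2 : Nat.card X.fixingSubgroup = Module.finrank X E := by
    exact IsGalois.card_fixingSubgroup_eq_finrank X
  have h3 : Nat.card (E ≃ₐ[F] E) = Module.finrank F E := by
    exact IsGalois.card_aut_eq_finrank F E
  have h4 : Module.finrank F X * Module.finrank X E = Module.finrank F E :=
    Module.finrank_mul_finrank F X E
  have hpos : 0 < Module.finrank X E := Module.finrank_pos
  have h5 := h1.trans h3
  rw [h2] at h5
  nlinarith [h5, h4]

lemma fixingSubgroup_anti' {X Y : IntermediateField F E} (h : X ≤ Y) :
    Y.fixingSubgroup ≤ X.fixingSubgroup := by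
  have h1 : X ⊔ Y = Y := sup_eq_right.mpr h
  calc Y.fixingSubgroup = (X ⊔ Y).fixingSubgroup := by rw [h1]
    _ = X.fixingSubgroup ⊓ Y.fixingSubgroup := fixingSubgroup_sup' X Y
    _ ≤ X.fixingSubgroup := inf_le_left

end FieldAux

set_option maxHeartbeats 2000000 in
/-- Let `M/K` be a finite extension of a perfect field `K`, with Galois closure
`M̃`, `G' = Gal(M̃/K)` and `H' = Gal(M̃/M)`. Then `M/K` is obtained by nontrivial strong
cluster magnification from some subextension `L/K` iff `G' ≅ A × B` for nontrivial subgroups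
`A`, `B`, under which `H'` corresponds to `A' × 1` for some subgroup `A' ≤ A` with
`[A : A'] > 2`. -/
theorem stmt_6 (K : Type*) [Field K] [PerfectField K]
    (M : IntermediateField K (AlgebraicClosure K)) [FiniteDimensional K ↥M] :
    (∃ L F : IntermediateField K (AlgebraicClosure K),
        L ≤ M ∧ IsStrongClusterMagnification K L F M ∧ F ≠ ⊥) ↔
      (∃ (A B : Subgroup (↥(galoisClosure K M) ≃ₐ[K] ↥(galoisClosure K M)))
          (φ : (↥(galoisClosure K M) ≃ₐ[K] ↥(galoisClosure K M)) ≃* ↥A × ↥B)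
          (A' : Subgroup ↥A),
        Nontrivial ↥A ∧ Nontrivial ↥B ∧
          Subgroup.map φ.toMonoidHom
              (IntermediateField.fixingSubgroup
                (IntermediateField.comap (galoisClosure K M).val M)) =
            A'.prod ⊥ ∧
          2 < A'.index) := by
  classical
  set Kbar := AlgebraicClosure K with hKbar
  set E := galoisClosure K M with hEdef
  haveI hnormE : Normal K ↥E := normalClosure.normal K ↥M Kbar
  haveI hfdE : FiniteDimensional K ↥E := normalClosure.is_finiteDimensional K ↥M Kbar
  haveI hsepKbar : Algebra.IsSeparable K Kbar := inferInstance
  haveI hsepE : Algebra.IsSeparable K ↥E := Algebra.isSeparable_tower_bot_of_isSeparable K ↥E Kbar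
  haveI hgalE : IsGalois K ↥E := {}
  have hME : M ≤ E := IntermediateField.le_normalClosure M
  have hrange : E.val.fieldRange = E := E.fieldRange_val
  have hmaptop : IntermediateField.map E.val ⊤ = E := by
    rw [← AlgHom.fieldRange_eq_map]; exact hrange
  have hinj : ∀ X Y : IntermediateField K ↥E, X.map E.val = Y.map E.val → X = Y := by
    intro X Y h
    rw [← IntermediateField.comap_map E.val X, ← IntermediateField.comap_map E.val Y, h]
  set Mc := IntermediateField.comap E.val M with hMcdef
  have hmapMc : Mc.map E.val = M :=
    IntermediateField.map_comap_eq_self (by rw [hrange]; exact hME)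
  constructor
  · -- Forward direction
    rintro ⟨L, F, hLM, ⟨hL2, hFfin, hFgal, hdis, hsup⟩, hFne⟩
    haveI : FiniteDimensional K ↥L :=
      FiniteDimensional.of_injective (IntermediateField.inclusion hLM).toLinearMap
        (IntermediateField.inclusion hLM).injective
    set Lt := galoisClosure K L with hLtdef
    haveI : Normal K ↥Lt := normalClosure.normal K ↥L Kbar
    haveI : FiniteDimensional K ↥Lt := normalClosure.is_finiteDimensional K ↥L Kbar
    haveI := hFgal
    have hLLt : L ≤ Lt := IntermediateField.le_normalClosure L
    have hFM : F ≤ M := hsup ▸ le_sup_right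
    have hLtE : Lt ≤ E := IntermediateField.normalClosure_mono L M hLM
    have hFE : F ≤ E := hFM.trans hME
    have hLE : L ≤ E := hLM.trans hME
    have hsupE : Lt ⊔ F = E := by
      refine le_antisymm (sup_le hLtE hFE) ?_
      have hMle : M ≤ Lt ⊔ F := by
        rw [← hsup]; exact sup_le (hLLt.trans le_sup_left) le_sup_right
      exact IntermediateField.normalClosure_le_iff_of_normal.mpr hMle
    -- pull everything back into E
    set Lc := IntermediateField.comap E.val L with hLcdef
    set Fc := IntermediateField.comap E.val F with hFcdef
    set Ltc := IntermediateField.comap E.val Lt with hLtcdef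
    have hmapLc : Lc.map E.val = L :=
      IntermediateField.map_comap_eq_self (by rw [hrange]; exact hLE)
    have hmapFc : Fc.map E.val = F :=
      IntermediateField.map_comap_eq_self (by rw [hrange]; exact hFE)
    have hmapLtc : Ltc.map E.val = Lt :=
      IntermediateField.map_comap_eq_self (by rw [hrange]; exact hLtE)
    have hsupc : Ltc ⊔ Fc = ⊤ := by
      apply hinj
      rw [IntermediateField.map_sup, hmapLtc, hmapFc, hsupE, hmaptop]
    have hinfc : Ltc ⊓ Fc = ⊥ := by
      apply hinj
      rw [IntermediateField.map_inf, hmapLtc, hmapFc, hdis, IntermediateField.map_bot]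
    have hLcMc : Lc ≤ Mc := fun x hx => hLM hx
    have hFcMc : Fc ≤ Mc := fun x hx => hFM hx
    have hLcLtc : Lc ≤ Ltc := fun x hx => hLLt hx
    have hMcsup : Lc ⊔ Fc = Mc := by
      apply hinj
      rw [IntermediateField.map_sup, hmapLc, hmapFc, hsup, hmapMc]
    -- Galois instances for the pulled-back fields
    haveI : IsGalois K ↥Ltc := by
      refine (IntermediateField.equivMap Ltc E.val).transfer_galois.mpr ?_
      rw [hmapLtc]
      exact { to_isSeparable := Algebra.isSeparable_tower_bot_of_isSeparable K ↥Lt Kbar }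
    haveI : IsGalois K ↥Fc := by
      refine (IntermediateField.equivMap Fc E.val).transfer_galois.mpr ?_
      rw [hmapFc]
      exact hFgal
    -- the two normal subgroups
    set NA := Fc.fixingSubgroup with hNA
    set NB := Ltc.fixingSubgroup with hNB
    haveI : NA.Normal := IsGalois.fixingSubgroup_normal_of_isGalois Fc
    haveI : NB.Normal := IsGalois.fixingSubgroup_normal_of_isGalois Ltc
    have hdG : NA ⊓ NB = ⊥ := by
      rw [hNA, hNB, ← fixingSubgroup_sup', sup_comm, hsupc, IntermediateField.fixingSubgroup_top]
    have hsG : NA ⊔ NB = ⊤ := by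
      rw [hNA, hNB, ← fixingSubgroup_inf', inf_comm, hinfc, IntermediateField.fixingSubgroup_bot]
    have hH'eq : Mc.fixingSubgroup = Lc.fixingSubgroup ⊓ NA := by
      rw [← hMcsup, fixingSubgroup_sup']
    have hH'le : Mc.fixingSubgroup ≤ NA := hH'eq ▸ inf_le_right
    have hNBle : NB ≤ Lc.fixingSubgroup := fixingSubgroup_anti' hLcLtc
    refine ⟨NA, NB, prodEquiv' NA NB hdG hsG, Subgroup.comap NA.subtype Mc.fixingSubgroup,
      ?_, ?_, ?_, ?_⟩
    · -- Nontrivial NA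
      rw [Subgroup.nontrivial_iff_ne_bot]
      intro hbot
      have hFtop : Fc = ⊤ := by
        apply fixingSubgroup_inj' (F := K) (E := ↥E)
        rw [← hNA, hbot, IntermediateField.fixingSubgroup_top]
      have hFeqE : F = E := by rw [← hmapFc, hFtop, hmaptop]
      have : Lt = ⊥ := by rw [← hdis, hFeqE, inf_eq_left.mpr hLtE]
      have hLbot : L = ⊥ := le_bot_iff.mp (this ▸ hLLt)
      rw [hLbot, IntermediateField.finrank_bot] at hL2
      omega
    · -- Nontrivial NB
      rw [Subgroup.nontrivial_iff_ne_bot]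
      intro hbot
      have hLttop : Ltc = ⊤ := by
        apply fixingSubgroup_inj' (F := K) (E := ↥E)
        rw [← hNB, hbot, IntermediateField.fixingSubgroup_top]
      have hLteqE : Lt = E := by rw [← hmapLtc, hLttop, hmaptop]
      have : F = ⊥ := by rw [← hdis, hLteqE, inf_eq_right.mpr hFE]
      exact hFne this
    · -- mapping of H'
      exact map_prodEquiv'_of_le NA NB hdG hsG hH'le
    · -- index
      have h1 : (Subgroup.comap NA.subtype Mc.fixingSubgroup).index =
          ((Subgroup.comap NA.subtype Mc.fixingSubgroup).prod (⊤ : Subgroup NB)).index := by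
        rw [Subgroup.index_prod, Subgroup.index_top, mul_one]
      have h2 : (Subgroup.comap NA.subtype Mc.fixingSubgroup).prod (⊤ : Subgroup NB) =
          Subgroup.map (prodEquiv' NA NB hdG hsG).toMonoidHom (Mc.fixingSubgroup ⊔ NB) :=
        (map_prodEquiv'_sup NA NB hdG hsG hH'le).symm
      have h3 : Mc.fixingSubgroup ⊔ NB = Lc.fixingSubgroup := by
        rw [hH'eq]
        exact inf_sup_eq_self' NA NB hdG hsG hNBle
      have h4 : (Subgroup.map (prodEquiv' NA NB hdG hsG).toMonoidHom Lc.fixingSubgroup).index =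
          Lc.fixingSubgroup.index := by
        rw [Subgroup.map_equiv_eq_comap_symm']
        exact Subgroup.index_comap_of_surjective _ (prodEquiv' NA NB hdG hsG).symm.surjective
      have h5 : Lc.fixingSubgroup.index = Module.finrank K ↥Lc := index_fixingSubgroup' Lc
      have h6 : Module.finrank K ↥Lc = Module.finrank K ↥L := by
        rw [← hmapLc]
        exact (IntermediateField.equivMap Lc E.val).toLinearEquiv.finrank_eq
      rw [h1, h2, h3, h4, h5, h6]
      exact hL2
  · rintro ⟨A, B, φ, A', hA, hB, hmap, hidx⟩
    set P := Subgroup.comap φ.toMonoidHom (A'.prod ⊤) with hP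
    set Q := Subgroup.comap φ.toMonoidHom ((⊤ : Subgroup ↥A).prod ⊥) with hQ
    set Q' := Subgroup.comap φ.toMonoidHom ((⊥ : Subgroup ↥A).prod ⊤) with hQ'
    have hH' : Mc.fixingSubgroup = Subgroup.comap φ.toMonoidHom (A'.prod ⊥) := by
      rw [← hmap, Subgroup.comap_map_eq_self_of_injective φ.injective]
    have hprodinf : (A'.prod (⊤ : Subgroup ↥B)) ⊓ ((⊤ : Subgroup ↥A).prod ⊥) =
        A'.prod ⊥ := by
      ext x
      simp only [Subgroup.mem_inf, Subgroup.mem_prod, Subgroup.mem_top, Subgroup.mem_bot,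
        and_true, true_and]
    have hPQ : P ⊓ Q = Mc.fixingSubgroup := by
      rw [hH', hP, hQ, ← Subgroup.comap_inf, hprodinf]
    have hQQ' : Q ⊔ Q' = ⊤ := by
      rw [eq_top_iff]
      intro g _
      have h1 : φ.symm ((φ g).1, 1) ∈ Q := by
        rw [hQ, Subgroup.mem_comap]
        show φ (φ.symm ((φ g).1, 1)) ∈ _
        rw [MulEquiv.apply_symm_apply]
        exact Subgroup.mem_prod.mpr ⟨Subgroup.mem_top _, Subgroup.mem_bot.mpr rfl⟩
      have h2 : φ.symm (1, (φ g).2) ∈ Q' := by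
        rw [hQ', Subgroup.mem_comap]
        show φ (φ.symm (1, (φ g).2)) ∈ _
        rw [MulEquiv.apply_symm_apply]
        exact Subgroup.mem_prod.mpr ⟨Subgroup.mem_bot.mpr rfl, Subgroup.mem_top _⟩
      have hgdecomp : g = φ.symm ((φ g).1, 1) * φ.symm (1, (φ g).2) := by
        rw [← map_mul]
        have : (((φ g).1, (1 : ↥B)) * ((1 : ↥A), (φ g).2)) = φ g := by
          rw [Prod.mk_mul_mk, mul_one, one_mul]
        rw [this, MulEquiv.symm_apply_apply]
      rw [hgdecomp]
      exact Subgroup.mul_mem _ (Subgroup.mem_sup_left h1) (Subgroup.mem_sup_right h2)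
    haveI hQnormal : Q.Normal := Subgroup.normal_comap _
    haveI hQ'normal : Q'.Normal := Subgroup.normal_comap _
    set Lc := IntermediateField.fixedField P with hLc
    set Fc := IntermediateField.fixedField Q with hFc
    set C := IntermediateField.fixedField Q' with hC
    have hfixLc : Lc.fixingSubgroup = P := IntermediateField.fixingSubgroup_fixedField P
    have hfixFc : Fc.fixingSubgroup = Q := IntermediateField.fixingSubgroup_fixedField Q
    have hfixC : C.fixingSubgroup = Q' := IntermediateField.fixingSubgroup_fixedField Q'
    haveI : IsGalois K ↥Fc := IsGalois.of_fixedField_normal_subgroup Q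
    haveI : IsGalois K ↥C := IsGalois.of_fixedField_normal_subgroup Q'
    have hbotprod : ((⊥ : Subgroup ↥A).prod (⊤ : Subgroup ↥B)) ≤ A'.prod ⊤ := by
      intro x hx
      rw [Subgroup.mem_prod] at hx ⊢
      have hx1 : x.1 = 1 := Subgroup.mem_bot.mp hx.1
      exact ⟨by rw [hx1]; exact A'.one_mem, Subgroup.mem_top _⟩
    have hMcLF : Lc ⊔ Fc = Mc := by
      apply fixingSubgroup_inj' (F := K) (E := ↥E)
      rw [fixingSubgroup_sup', hfixLc, hfixFc, hPQ]
    have hLcMc : Lc ≤ Mc := by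
      have h1 : Mc.fixingSubgroup ≤ P := by
        rw [hH', hP]
        apply Subgroup.comap_mono
        intro x hx
        rw [Subgroup.mem_prod] at hx ⊢
        exact ⟨hx.1, Subgroup.mem_top _⟩
      have h2 : Lc ≤ IntermediateField.fixedField Mc.fixingSubgroup :=
        (IntermediateField.le_iff_le Mc.fixingSubgroup Lc).mpr (hfixLc ▸ h1)
      rwa [IsGalois.fixedField_fixingSubgroup Mc] at h2
    have hLcC : Lc ≤ C := by
      have h1 : Q' ≤ P := by rw [hQ', hP]; exact Subgroup.comap_mono hbotprod
      exact (IntermediateField.le_iff_le Q' Lc).mpr (hfixLc ▸ h1)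
    have hCFc : C ⊓ Fc = ⊥ := by
      apply fixingSubgroup_inj' (F := K) (E := ↥E)
      rw [fixingSubgroup_inf', hfixC, hfixFc, sup_comm, hQQ',
        IntermediateField.fixingSubgroup_bot]
    have hrankLc : Module.finrank K ↥Lc = A'.index := by
      rw [← index_fixingSubgroup' Lc, hfixLc, hP,
        Subgroup.index_comap_of_surjective _ φ.surjective, Subgroup.index_prod,
        Subgroup.index_top, mul_one]
    have hrankFc : Module.finrank K ↥Fc = Nat.card ↥B := by
      rw [← index_fixingSubgroup' Fc, hfixFc, hQ,
        Subgroup.index_comap_of_surjective _ φ.surjective, Subgroup.index_prod,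
        Subgroup.index_top, one_mul, Subgroup.index_bot]
    have hcardB : 1 < Nat.card ↥B := Finite.one_lt_card
    refine ⟨Lc.map E.val, Fc.map E.val, ?_, ⟨?_, ?_, ?_, ?_, ?_⟩, ?_⟩
    · rw [← hmapMc]; exact IntermediateField.map_mono E.val hLcMc
    · rw [← (IntermediateField.equivMap Lc E.val).toLinearEquiv.finrank_eq, hrankLc]
      exact hidx
    · exact Module.Finite.equiv (IntermediateField.equivMap Fc E.val).toLinearEquiv
    · exact IsGalois.of_algEquiv (IntermediateField.equivMap Fc E.val)
    · haveI : Normal K ↥(C.map E.val) :=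
        Normal.of_algEquiv (IntermediateField.equivMap C E.val)
      have hLC' : Lc.map E.val ≤ C.map E.val := IntermediateField.map_mono E.val hLcC
      have hgal : galoisClosure K (Lc.map E.val) ≤ C.map E.val :=
        IntermediateField.normalClosure_le_iff_of_normal.mpr hLC'
      have hle : galoisClosure K (Lc.map E.val) ⊓ Fc.map E.val ≤ ⊥ := by
        calc galoisClosure K (Lc.map E.val) ⊓ Fc.map E.val
            ≤ C.map E.val ⊓ Fc.map E.val := inf_le_inf_right _ hgal
          _ = (C ⊓ Fc).map E.val := (IntermediateField.map_inf _ _ _).symm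
          _ = ⊥ := by rw [hCFc, IntermediateField.map_bot]
      exact le_bot_iff.mp hle
    · rw [← IntermediateField.map_sup, hMcLF, hmapMc]
    · intro h
      have hFcbot : Fc = ⊥ := hinj _ _ (by rw [h, IntermediateField.map_bot])
      rw [hFcbot, IntermediateField.finrank_bot] at hrankFc
      omega
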